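/- Let X be a metric space and μ, ν finite Borel measures on X. Suppose ε > 0 and A is a Borel set with μ(A ∖ A₀) ≤ ε, where A₀ ⊆ B(A, ε) is Borel, A ⊆ A₀ ∪ R with μ(R), ν(R) ≤ ε, and |ν(A₀) − μ(A₀)| ≤ ε. Then μ(A) ≤ ν(B(A, 4ε)) + 4ε and ν(A) ≤ μ(B(A, 4ε)) + 4ε; hence if such data exist for every Borel set A simultaneously (with the same A₀-type approximants drawn from a fixed finite family), the Prokhorov distance satisfies d_P(μ, ν) ≤ 4ε. -/

import Mathlib

open MeasureTheory Metric

lemma stmt15_aux {X : Type*} [MetricSpace X] [MeasurableSpace X] [BorelSpace X]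
    (μ ν : Measure X) [IsFiniteMeasure μ] [IsFiniteMeasure ν]
    (ε : ℝ) (hε : 0 < ε)
    (A A₀ R : Set X) (hA : MeasurableSet A) (hA₀ : MeasurableSet A₀) (hR : MeasurableSet R)
    (h₀ : A₀ ⊆ thickening ε A) (hdiff : μ (A \ A₀) ≤ ENNReal.ofReal ε)
    (hcov : A ⊆ A₀ ∪ R) (hμR : μ R ≤ ENNReal.ofReal ε) (hνR : ν R ≤ ENNReal.ofReal ε)
    (habs : |(ν A₀).toReal - (μ A₀).toReal| ≤ ε) :
    μ A ≤ ν (thickening (4 * ε) A) + ENNReal.ofReal (4 * ε) ∧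
    ν A ≤ μ (thickening (4 * ε) A) + ENNReal.ofReal (4 * ε) := by
  have hεle : ε ≤ 4 * ε := by linarith
  have hsub : A₀ ⊆ thickening (4 * ε) A := h₀.trans (thickening_mono hεle A)
  have habs' := abs_le.mp habs
  have hμν : μ A₀ ≤ ν A₀ + ENNReal.ofReal ε := by
    have h1 : (μ A₀).toReal ≤ (ν A₀).toReal + ε := by linarith [habs'.1]
    calc μ A₀ = ENNReal.ofReal ((μ A₀).toReal) := (ENNReal.ofReal_toReal (measure_ne_top μ A₀)).symm
      _ ≤ ENNReal.ofReal ((ν A₀).toReal + ε) := ENNReal.ofReal_le_ofReal h1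
      _ = ENNReal.ofReal ((ν A₀).toReal) + ENNReal.ofReal ε :=
          ENNReal.ofReal_add ENNReal.toReal_nonneg hε.le
      _ = ν A₀ + ENNReal.ofReal ε := by rw [ENNReal.ofReal_toReal (measure_ne_top ν A₀)]
  have hνμ : ν A₀ ≤ μ A₀ + ENNReal.ofReal ε := by
    have h1 : (ν A₀).toReal ≤ (μ A₀).toReal + ε := by linarith [habs'.2]
    calc ν A₀ = ENNReal.ofReal ((ν A₀).toReal) := (ENNReal.ofReal_toReal (measure_ne_top ν A₀)).symm
      _ ≤ ENNReal.ofReal ((μ A₀).toReal + ε) := ENNReal.ofReal_le_ofReal h1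
      _ = ENNReal.ofReal ((μ A₀).toReal) + ENNReal.ofReal ε :=
          ENNReal.ofReal_add ENNReal.toReal_nonneg hε.le
      _ = μ A₀ + ENNReal.ofReal ε := by rw [ENNReal.ofReal_toReal (measure_ne_top μ A₀)]
  have h2ε : ENNReal.ofReal ε + ENNReal.ofReal ε ≤ ENNReal.ofReal (4 * ε) := by
    rw [← ENNReal.ofReal_add hε.le hε.le]
    exact ENNReal.ofReal_le_ofReal (by linarith)
  constructor
  · calc μ A ≤ μ (A₀ ∪ (A \ A₀)) := measure_mono (by intro x hx; by_cases h : x ∈ A₀ <;> simp [h, hx])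
      _ ≤ μ A₀ + μ (A \ A₀) := measure_union_le _ _
      _ ≤ (ν A₀ + ENNReal.ofReal ε) + ENNReal.ofReal ε := add_le_add hμν hdiff
      _ ≤ ν (thickening (4 * ε) A) + (ENNReal.ofReal ε + ENNReal.ofReal ε) := by
          rw [add_assoc]; exact add_le_add_left (measure_mono hsub) _
      _ ≤ ν (thickening (4 * ε) A) + ENNReal.ofReal (4 * ε) := add_le_add_right h2ε _
  · calc ν A ≤ ν (A₀ ∪ R) := measure_mono hcov
      _ ≤ ν A₀ + ν R := measure_union_le _ _
      _ ≤ (μ A₀ + ENNReal.ofReal ε) + ENNReal.ofReal ε := add_le_add hνμ hνR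
      _ ≤ μ (thickening (4 * ε) A) + (ENNReal.ofReal ε + ENNReal.ofReal ε) := by
          rw [add_assoc]; exact add_le_add_left (measure_mono hsub) _
      _ ≤ μ (thickening (4 * ε) A) + ENNReal.ofReal (4 * ε) := add_le_add_right h2ε _

theorem stmt15 {X : Type*} [MetricSpace X] [MeasurableSpace X] [BorelSpace X]
    (μ ν : Measure X) [IsFiniteMeasure μ] [IsFiniteMeasure ν]
    (ε : ℝ) (hε : 0 < ε) :
    (∀ A A₀ R : Set X, MeasurableSet A → MeasurableSet A₀ → MeasurableSet R →
      A₀ ⊆ thickening ε A → μ (A \ A₀) ≤ ENNReal.ofReal ε →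
      A ⊆ A₀ ∪ R → μ R ≤ ENNReal.ofReal ε → ν R ≤ ENNReal.ofReal ε →
      |(ν A₀).toReal - (μ A₀).toReal| ≤ ε →
      μ A ≤ ν (thickening (4 * ε) A) + ENNReal.ofReal (4 * ε) ∧
      ν A ≤ μ (thickening (4 * ε) A) + ENNReal.ofReal (4 * ε)) ∧
    ((∀ A : Set X, MeasurableSet A → ∃ A₀ R : Set X,
        MeasurableSet A₀ ∧ MeasurableSet R ∧
        A₀ ⊆ thickening ε A ∧ μ (A \ A₀) ≤ ENNReal.ofReal ε ∧
        A ⊆ A₀ ∪ R ∧ μ R ≤ ENNReal.ofReal ε ∧ ν R ≤ ENNReal.ofReal ε ∧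
        |(ν A₀).toReal - (μ A₀).toReal| ≤ ε) →
      levyProkhorovEDist μ ν ≤ ENNReal.ofReal (4 * ε)) := by
  constructor
  · intro A A₀ R hA hA₀ hR h₀ hdiff hcov hμR hνR habs
    exact stmt15_aux μ ν ε hε A A₀ R hA hA₀ hR h₀ hdiff hcov hμR hνR habs
  · intro hdata
    apply levyProkhorovEDist_le_of_forall μ ν (ENNReal.ofReal (4 * ε))
    intro δ B hδ hδtop hB
    obtain ⟨A₀, R, hA₀, hR, h₀, hdiff, hcov, hμR, hνR, habs⟩ := hdata B hB
    obtain ⟨h1, h2⟩ := stmt15_aux μ ν ε hε B A₀ R hB hA₀ hR h₀ hdiff hcov hμR hνR habs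
    have hle : 4 * ε ≤ δ.toReal := by
      have := (ENNReal.ofReal_le_iff_le_toReal hδtop.ne).mp hδ.le
      linarith
    have hth : thickening (4 * ε) B ⊆ thickening δ.toReal B := thickening_mono hle B
    constructor
    · exact h1.trans (add_le_add (measure_mono hth) hδ.le)
    · exact h2.trans (add_le_add (measure_mono hth) hδ.le)
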